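/- Let (λ_k)_{k∈ℕ} be a sequence of nonnegative reals with Σ_k λ_k² < ∞ and λ_k > 0 for infinitely many k. Then lim_{n→∞} [exp(−(1/2)Σ_{k=0}^{n−1} log(1+λ_k²)) − exp(−(1/2)Σ_{k=0}^{∞} log(1+λ_k²))] / (Σ_{k=n}^{∞} λ_k²) = (1/2)·exp(−(1/2)Σ_{k=0}^{∞} log(1+λ_k²)). -/

import Mathlib

open Filter Topology

private lemma log_one_add_ge (x : ℝ) (hx : 0 ≤ x) : x - x ^ 2 ≤ Real.log (1 + x) := by
  have h1 : (0:ℝ) < 1 + x := by linarith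
  have h2 : Real.log ((1 + x)⁻¹) ≤ (1 + x)⁻¹ - 1 :=
    Real.log_le_sub_one_of_pos (by positivity)
  rw [Real.log_inv] at h2
  have h3 : x / (1 + x) ≤ Real.log (1 + x) := by
    have : (1:ℝ) - (1+x)⁻¹ = x / (1+x) := by field_simp; ring
    linarith [this ▸ (by linarith : 1 - (1+x)⁻¹ ≤ Real.log (1 + x))]
  have h4 : x - x ^ 2 ≤ x / (1 + x) := by
    rw [div_eq_mul_inv, ← sub_nonneg]
    have : x * (1 + x)⁻¹ - (x - x ^ 2) = x ^ 2 * x * (1 + x)⁻¹ := by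
      field_simp; ring
    rw [this]; positivity
  linarith

private lemma log_one_add_le (x : ℝ) (hx : 0 ≤ x) : Real.log (1 + x) ≤ x := by
  have := Real.log_le_sub_one_of_pos (x := 1 + x) (by linarith)
  linarith

/-- Sharp weak rate in the additive noise case: for nonnegative `(λ_k)` with `Σλ_k² < ∞`
and `λ_k > 0` infinitely often,
`(exp(−½Σ_{k<n} log(1+λ_k²)) − exp(−½Σ_{k} log(1+λ_k²))) / Σ_{k≥n} λ_k²
  → ½·exp(−½Σ_k log(1+λ_k²))` as `n → ∞`. -/
theorem sharp_weak_rate (l : ℕ → ℝ) (hpos : ∀ k, 0 ≤ l k)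
    (hsum : Summable fun k => l k ^ 2)
    (hinf : {k : ℕ | 0 < l k}.Infinite) :
    Tendsto (fun n : ℕ =>
        (Real.exp (-(1/2) * ∑ k ∈ Finset.range n, Real.log (1 + l k ^ 2))
          - Real.exp (-(1/2) * ∑' k : ℕ, Real.log (1 + l k ^ 2)))
        / (∑' k : ℕ, l (n + k) ^ 2))
      atTop
      (𝓝 ((1/2) * Real.exp (-(1/2) * ∑' k : ℕ, Real.log (1 + l k ^ 2)))) := by
  set S : ℝ := ∑' k : ℕ, Real.log (1 + l k ^ 2) with hSdef
  have hlog_nonneg : ∀ k, 0 ≤ Real.log (1 + l k ^ 2) := fun k =>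
    Real.log_nonneg (by nlinarith [sq_nonneg (l k)])
  have hsumlog : Summable fun k => Real.log (1 + l k ^ 2) :=
    hsum.of_nonneg_of_le hlog_nonneg fun k => log_one_add_le _ (sq_nonneg _)
  set T : ℕ → ℝ := fun n => ∑' k : ℕ, l (n + k) ^ 2 with hTdef
  set R : ℕ → ℝ := fun n => ∑' k : ℕ, Real.log (1 + l (n + k) ^ 2) with hRdef
  -- summability of tails
  have hsumT : ∀ n, Summable fun k => l (n + k) ^ 2 := fun n => by
    have := (summable_nat_add_iff n).2 hsum
    exact this.congr fun k => by rw [add_comm]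
  have hsumR : ∀ n, Summable fun k => Real.log (1 + l (n + k) ^ 2) := fun n => by
    have := (summable_nat_add_iff n).2 hsumlog
    exact this.congr fun k => by rw [add_comm k n]
  -- positivity of tails
  have hTpos : ∀ n, 0 < T n := fun n => by
    obtain ⟨m, hm, hnm⟩ := hinf.exists_gt n
    have hmn : n ≤ m := hnm.le
    refine Summable.tsum_pos (hsumT n) (fun k => sq_nonneg _) (m - n) ?_
    have h1 : n + (m - n) = m := by omega
    have hm' : 0 < l m := hm
    rw [h1]; exact pow_pos hm' 2
  have hRpos : ∀ n, 0 < R n := fun n => by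
    obtain ⟨m, hm, hnm⟩ := hinf.exists_gt n
    refine Summable.tsum_pos (hsumR n) (fun k => hlog_nonneg _) (m - n) ?_
    have h1 : n + (m - n) = m := by omega
    have hm' : 0 < l m := hm
    rw [h1]
    exact Real.log_pos (by nlinarith [pow_pos hm' 2])
  have hRleT : ∀ n, R n ≤ T n := fun n =>
    Summable.tsum_le_tsum (fun k => log_one_add_le _ (sq_nonneg _)) (hsumR n) (hsumT n)
  -- tails tend to zero
  have hT0 : Tendsto T atTop (𝓝 0) := by
    have := tendsto_sum_nat_add fun k => l k ^ 2
    refine this.congr fun n => tsum_congr fun k => by rw [add_comm]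
  have hR0 : Tendsto R atTop (𝓝 0) :=
    squeeze_zero (fun n => (hRpos n).le) hRleT hT0
  -- decomposition: partial sum + tail = total
  have hsplit : ∀ n, (∑ k ∈ Finset.range n, Real.log (1 + l k ^ 2)) = S - R n := fun n => by
    have h : (∑ k ∈ Finset.range n, Real.log (1 + l k ^ 2))
        + (∑' i : ℕ, Real.log (1 + l (i + n) ^ 2)) = S :=
      Summable.sum_add_tsum_nat_add n hsumlog
    have h2 : (∑' i : ℕ, Real.log (1 + l (i + n) ^ 2)) = R n :=
      tsum_congr fun k => by rw [add_comm k n]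
    rw [h2] at h
    linarith [h]
  -- ratio of tails tends to 1
  have hratio : Tendsto (fun n => R n / T n) atTop (𝓝 1) := by
    rw [Metric.tendsto_atTop]
    intro ε hε
    set δ : ℝ := min (ε / 2) 1 with hδdef
    have hδpos : 0 < δ := lt_min (by linarith) one_pos
    have hsq0 : Tendsto (fun k => l k ^ 2) atTop (𝓝 0) := hsum.tendsto_atTop_zero
    obtain ⟨N, hN⟩ := (Metric.tendsto_atTop.1 hsq0) δ hδpos
    refine ⟨N, fun n hn => ?_⟩
    have hbound : ∀ k, (1 - δ) * l (n + k) ^ 2 ≤ Real.log (1 + l (n + k) ^ 2) := by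
      intro k
      have hk : l (n + k) ^ 2 < δ := by
        have := hN (n + k) (le_trans hn (Nat.le_add_right n k))
        rwa [Real.dist_eq, sub_zero, abs_of_nonneg (sq_nonneg _)] at this
      have := log_one_add_ge (l (n + k) ^ 2) (sq_nonneg _)
      nlinarith [sq_nonneg (l (n + k))]
    have hlow : (1 - δ) * T n ≤ R n := by
      have := Summable.tsum_le_tsum hbound ((hsumT n).mul_left (1 - δ)) (hsumR n)
      rwa [tsum_mul_left] at this
    have hTn := hTpos n
    have h1 : 1 - δ ≤ R n / T n := by
      rw [le_div_iff₀ hTn]; linarith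
    have h2 : R n / T n ≤ 1 := by
      rw [div_le_one hTn]; exact hRleT n
    rw [Real.dist_eq]
    have hd : |R n / T n - 1| ≤ δ := abs_le.2 ⟨by linarith, by linarith⟩
    have hδε : δ < ε := lt_of_le_of_lt (min_le_left _ _) (by linarith)
    linarith
  -- (exp y - 1)/y → 1 at 0
  have hexp : Tendsto (fun y : ℝ => (Real.exp y - 1) / y) (𝓝[≠] (0:ℝ)) (𝓝 1) := by
    have h := Real.hasDerivAt_exp 0
    rw [hasDerivAt_iff_tendsto_slope] at h
    have h2 : Tendsto (slope Real.exp 0) (𝓝[≠] (0:ℝ)) (𝓝 1) := by simpa using h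
    refine h2.congr' ?_
    filter_upwards [self_mem_nhdsWithin] with y hy
    simp [slope_def_field, Real.exp_zero]
  have hhalfR : Tendsto (fun n => R n / 2) atTop (𝓝[≠] (0:ℝ)) := by
    refine tendsto_nhdsWithin_of_tendsto_nhds_of_eventually_within _ ?_ ?_
    · simpa using hR0.div_const 2
    · filter_upwards with n
      simp only [Set.mem_compl_iff, Set.mem_singleton_iff]
      exact (div_pos (hRpos n) two_pos).ne'
  have hcomp : Tendsto (fun n => (Real.exp (R n / 2) - 1) / (R n / 2)) atTop (𝓝 1) :=
    hexp.comp hhalfR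
  -- assemble
  have hlim : Tendsto (fun n =>
      Real.exp (-(1/2) * S) * ((Real.exp (R n / 2) - 1) / (R n / 2)) * (R n / T n * (1/2)))
      atTop (𝓝 ((1/2) * Real.exp (-(1/2) * S))) := by
    have := ((tendsto_const_nhds (x := Real.exp (-(1/2) * S))).mul hcomp).mul
      (hratio.mul (tendsto_const_nhds (x := (1:ℝ)/2)))
    convert this using 2
    ring
  refine hlim.congr fun n => ?_
  have hRn := hRpos n
  have hTn := hTpos n
  rw [hsplit n]
  have hexpand : Real.exp (-(1/2) * (S - R n)) = Real.exp (-(1/2) * S) * Real.exp (R n / 2) := by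
    rw [← Real.exp_add]; ring_nf
  rw [hexpand]
  have hTeq : (∑' k : ℕ, l (n + k) ^ 2) = T n := rfl
  rw [hTeq]
  field_simp
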